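/- Let n ≥ 1 and B ≥ 2 be integers. The constant κ(n,B) in the stability theorem is best possible: there exists a function f on the convex set Δ_n ⊆ ℝ^{n+1} that is approximately convex with respect to Δ_{B-1} (namely f = E) such that for every convex function g : Δ_n → ℝ with g(x) ≤ f(x) for all x ∈ Δ_n, one has sup_{x∈Δ_n} (f(x) − g(x)) ≥ κ(n,B), where κ(n,B) = ⌊log_B n⌋ + ⌈B(n + 1 − B^{⌊log_B n⌋})/(B − 1)⌉ / (n + 1). -/

import Mathlib

open Finset

/-- `f` is approximately convex with respect to `Δ_{B-1}` on the convex set `U`,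
with tolerance `ε`. -/
def ApproxConvexWrt {V : Type*} [AddCommMonoid V] [Module ℝ V]
    (B : ℕ) (U : Set V) (f : V → ℝ) (ε : ℝ) : Prop :=
  ∀ (x : Fin B → V) (t : Fin B → ℝ),
    (∀ i, x i ∈ U) → (∀ i, 0 ≤ t i) → (∑ i, t i) = 1 →
    f (∑ i, t i • x i) ≤ (∑ i, t i * f (x i)) + ε

/-- `κ(n,B) = ⌊log_B n⌋ + ⌈B(n+1-B^⌊log_B n⌋)/(B-1)⌉/(n+1)`. -/
noncomputable def kappa (n B : ℕ) : ℝ :=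
  (⌊Real.logb B n⌋ : ℝ) +
    (⌈(B : ℝ) * ((n : ℝ) + 1 - (B : ℝ) ^ (⌊Real.logb B n⌋ : ℤ)) / ((B : ℝ) - 1)⌉ : ℝ) /
      ((n : ℝ) + 1)


lemma lemA (Br : ℝ) (hB : 2 ≤ Br) (k : ℕ) :
    Br * (Br ^ k - 1) ≤ k * (Br - 1) * Br ^ k := by
  induction k with
  | zero => simp
  | succ k ih =>
      have h1 : (1:ℝ) ≤ Br ^ k := one_le_pow₀ (by linarith)
      push_cast
      rw [pow_succ]
      have h2 := mul_le_mul_of_nonneg_left ih (by linarith : (0:ℝ) ≤ Br)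
      have h3 : Br * (Br - 1) * 1 ≤ Br * (Br - 1) * Br ^ k :=
        mul_le_mul_of_nonneg_left h1 (by nlinarith)
      nlinarith [h2, h3]

lemma lemB (Br : ℝ) (hB : 2 ≤ Br) (k : ℕ) :
    (k : ℝ) * (Br - 1) ≤ Br * (Br ^ k - 1) := by
  have h := one_add_mul_le_pow (a := Br - 1) (by linarith) k
  rw [show (1 + (Br - 1)) = Br by ring] at h
  have h1 : (1:ℝ) ≤ Br ^ k := one_le_pow₀ (by linarith)
  nlinarith

lemma perterm (Br : ℝ) (hB : 2 ≤ Br) (ℓ m : ℕ) :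
    (ℓ : ℝ) + Br / (Br - 1) - Br ^ (ℓ + 1) / ((Br - 1) * Br ^ m) ≤ (m : ℝ) := by
  have hB0 : (0:ℝ) < Br := by linarith
  have hB1 : (0:ℝ) < Br - 1 := by linarith
  rcases le_total ℓ m with h | h
  · obtain ⟨k, rfl⟩ : ∃ k, m = ℓ + k := ⟨m - ℓ, by omega⟩
    have hpk : (0:ℝ) < Br ^ k := pow_pos hB0 k
    have e : Br ^ (ℓ + 1) / ((Br - 1) * Br ^ (ℓ + k)) = Br / ((Br - 1) * Br ^ k) := by
      rw [pow_add, pow_add, pow_one]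
      have : (0:ℝ) < Br ^ ℓ := pow_pos hB0 ℓ
      field_simp
    rw [e]
    have key : Br / (Br - 1) - Br / ((Br - 1) * Br ^ k) ≤ (k : ℝ) := by
      rw [div_sub_div _ _ hB1.ne' (by positivity), div_le_iff₀ (by positivity)]
      have := lemA Br hB k
      nlinarith
    push_cast
    linarith
  · obtain ⟨k, rfl⟩ : ∃ k, ℓ = m + k := ⟨ℓ - m, by omega⟩
    have hpk : (0:ℝ) < Br ^ k := pow_pos hB0 k
    have e : Br ^ (m + k + 1) / ((Br - 1) * Br ^ m) = Br ^ (k + 1) / (Br - 1) := by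
      rw [show m + k + 1 = m + (k + 1) by ring, pow_add]
      have : (0:ℝ) < Br ^ m := pow_pos hB0 m
      field_simp
    rw [e]
    have key : (k : ℝ) * (Br - 1) + Br ≤ Br ^ (k + 1) := by
      have := lemB Br hB k
      rw [pow_succ]
      nlinarith
    have key2 : (k : ℝ) + Br / (Br - 1) ≤ Br ^ (k + 1) / (Br - 1) := by
      rw [show (k : ℝ) + Br / (Br - 1) = ((k : ℝ) * (Br - 1) + Br) / (Br - 1) by
        field_simp]
      exact div_le_div_of_nonneg_right key hB1.le |>.trans_eq rfl
    push_cast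
    linarith

lemma kraftLB (n B : ℕ) (hB : 2 ≤ B) (ℓ : ℕ) (m : Fin (n + 1) → ℕ)
    (h : ∑ j, ((B : ℝ) ^ (m j))⁻¹ ≤ 1) :
    ((n : ℝ) + 1) * ℓ + (B : ℝ) * ((n : ℝ) + 1 - (B : ℝ) ^ ℓ) / ((B : ℝ) - 1)
      ≤ ∑ j, (m j : ℝ) := by
  set Br : ℝ := (B : ℝ) with hBr
  have hB2 : (2:ℝ) ≤ Br := by rw [hBr]; exact_mod_cast hB
  have hB0 : (0:ℝ) < Br := by linarith
  have hB1 : (0:ℝ) < Br - 1 := by linarith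
  have hsum : ∑ j, ((ℓ : ℝ) + Br / (Br - 1) - Br ^ (ℓ + 1) / ((Br - 1) * Br ^ (m j)))
      ≤ ∑ j, (m j : ℝ) := Finset.sum_le_sum fun j _ => perterm Br hB2 ℓ (m j)
  have e1 : ∀ j : Fin (n + 1),
      Br ^ (ℓ + 1) / ((Br - 1) * Br ^ (m j))
        = (Br ^ (ℓ + 1) / (Br - 1)) * (Br ^ (m j))⁻¹ := by
    intro j
    rw [div_mul_eq_div_div_swap, div_eq_mul_inv, div_eq_mul_inv, div_eq_mul_inv]
    ring
  rw [Finset.sum_sub_distrib, Finset.sum_const, Finset.card_univ, Fintype.card_fin] at hsum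
  simp only [e1, ← Finset.mul_sum] at hsum
  have hc : (0:ℝ) ≤ Br ^ (ℓ + 1) / (Br - 1) := by positivity
  have h2 : Br ^ (ℓ + 1) / (Br - 1) * (∑ j, ((Br:ℝ) ^ (m j))⁻¹) ≤ Br ^ (ℓ + 1) / (Br - 1) * 1 :=
    mul_le_mul_of_nonneg_left h hc
  have e2 : ((n:ℝ) + 1) * ℓ + Br * ((n : ℝ) + 1 - Br ^ ℓ) / (Br - 1)
      = (↑(n+1)) • ((ℓ : ℝ) + Br / (Br - 1)) - Br ^ (ℓ + 1) / (Br - 1) * 1 := by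
    simp only [nsmul_eq_mul]
    push_cast
    rw [pow_succ]
    field_simp
    ring
  rw [e2]
  linarith


noncomputable def Eset (n B : ℕ) (x : Fin (n + 1) → ℝ) : Set ℝ :=
  {r | ∃ m : Fin (n + 1) → ℕ,
    (∑ j, (if x j = 0 then 0 else ((B : ℝ) ^ (m j))⁻¹)) ≤ 1 ∧
    r = ∑ j, (m j : ℝ) * x j}

noncomputable def Efun (n B : ℕ) (x : Fin (n + 1) → ℝ) : ℝ := sInf (Eset n B x)

lemma Eset_nonempty (n B : ℕ) (hB : 2 ≤ B) (x : Fin (n + 1) → ℝ) :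
    (Eset n B x).Nonempty := by
  refine ⟨∑ j, ((n + 1 : ℕ) : ℝ) * x j, fun _ => n + 1, ?_, rfl⟩
  have hBp : (0:ℝ) < (B : ℝ) ^ (n + 1) := by positivity
  have hle : ((n : ℝ) + 1) ≤ (B : ℝ) ^ (n + 1) := by
    calc ((n : ℝ) + 1) ≤ (2 : ℝ) ^ (n + 1) := by
          have : n + 1 < 2 ^ (n + 1) := Nat.lt_two_pow_self
          exact_mod_cast this.le
      _ ≤ (B : ℝ) ^ (n + 1) := by
          apply pow_le_pow_left₀ (by norm_num)
          exact_mod_cast hB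
  calc ∑ j : Fin (n+1), (if x j = 0 then 0 else ((B : ℝ) ^ (n + 1))⁻¹)
      ≤ ∑ j : Fin (n+1), ((B : ℝ) ^ (n + 1))⁻¹ := by
        apply Finset.sum_le_sum
        intro j _
        split
        · positivity
        · exact le_rfl
    _ = ((n : ℝ) + 1) * ((B : ℝ) ^ (n + 1))⁻¹ := by
        rw [Finset.sum_const, Finset.card_univ, Fintype.card_fin]; push_cast; ring
    _ ≤ 1 := by
        rw [mul_inv_le_iff₀ hBp, one_mul]; exact hle

lemma Eset_bddBelow (n B : ℕ) (x : Fin (n + 1) → ℝ) (hx : ∀ j, 0 ≤ x j) :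
    BddBelow (Eset n B x) := by
  refine ⟨0, fun r hr => ?_⟩
  obtain ⟨m, -, rfl⟩ := hr
  exact Finset.sum_nonneg fun j _ => mul_nonneg (by positivity) (hx j)

lemma Efun_le (n B : ℕ) (x : Fin (n + 1) → ℝ) (hx : ∀ j, 0 ≤ x j)
    {r : ℝ} (hr : r ∈ Eset n B x) : Efun n B x ≤ r :=
  csInf_le (Eset_bddBelow n B x hx) hr

lemma Efun_approx (n B : ℕ) (hB : 2 ≤ B) :
    ApproxConvexWrt B (stdSimplex ℝ (Fin (n + 1))) (Efun n B) 1 := by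
  intro x t hx ht hts
  have hBnat : 0 < B := by omega
  have hB0 : (0:ℝ) < (B : ℝ) := by exact_mod_cast hBnat
  set y : Fin (n+1) → ℝ := ∑ i, t i • x i with hy
  have hyj : ∀ j, y j = ∑ i, t i * x i j := by
    intro j; rw [hy]; simp [Finset.sum_apply]
  have hxnn : ∀ i j, 0 ≤ x i j := fun i j => (hx i).1 j
  have hynn : ∀ j, 0 ≤ y j := fun j => by
    rw [hyj]; exact Finset.sum_nonneg fun i _ => mul_nonneg (ht i) (hxnn i j)
  have hysum : ∑ j, y j = 1 := by
    simp_rw [hyj]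
    rw [Finset.sum_comm]
    calc ∑ i, ∑ j, t i * x i j = ∑ i, t i * ∑ j, x i j := by
          simp [Finset.mul_sum]
      _ = ∑ i, t i := Finset.sum_congr rfl fun i _ => by rw [(hx i).2, mul_one]
      _ = 1 := hts
  refine le_of_forall_pos_le_add fun ε hε => ?_
  have hopt : ∀ i : Fin B, ∃ m : Fin (n+1) → ℕ,
      (∑ j, (if x i j = 0 then 0 else ((B : ℝ) ^ (m j))⁻¹)) ≤ 1 ∧
      ∑ j, (m j : ℝ) * x i j < Efun n B (x i) + ε := by
    intro i
    obtain ⟨r, hr, hrlt⟩ := Real.lt_sInf_add_pos (Eset_nonempty n B hB (x i)) hε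
    obtain ⟨m, hm1, rfl⟩ := hr
    exact ⟨m, hm1, hrlt⟩
  choose mm hkraft hval using hopt
  set S : Fin (n+1) → Finset (Fin B) :=
    fun j => univ.filter (fun i => t i ≠ 0 ∧ x i j ≠ 0) with hS
  have hSy : ∀ j, y j ≠ 0 ↔ (S j).Nonempty := by
    intro j
    constructor
    · intro hyj0
      by_contra hne
      apply hyj0
      rw [hyj]
      apply Finset.sum_eq_zero
      intro i _
      by_contra hti
      refine hne ⟨i, ?_⟩
      simp only [hS, Finset.mem_filter, Finset.mem_univ, true_and]
      constructor
      · intro h; exact hti (by rw [h, zero_mul])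
      · intro h; exact hti (by rw [h, mul_zero])
    · rintro ⟨i, hi⟩
      simp only [hS, Finset.mem_filter, Finset.mem_univ, true_and] at hi
      have hpos : 0 < t i * x i j :=
        mul_pos ((ht i).lt_of_ne (Ne.symm hi.1)) ((hxnn i j).lt_of_ne (Ne.symm hi.2))
      have : t i * x i j ≤ y j := by
        rw [hyj]
        exact Finset.single_le_sum (fun k _ => mul_nonneg (ht k) (hxnn k j))
          (Finset.mem_univ i)
      exact (lt_of_lt_of_le hpos this).ne'
  set M : Fin (n+1) → ℕ :=
    fun j => if h : (S j).Nonempty then 1 + (S j).inf' h (fun i => mm i j) else 0 with hM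
  set T : Finset (Fin B) := univ.filter (fun i => t i ≠ 0) with hT
  -- Kraft condition for y
  have hkrafty : (∑ j, (if y j = 0 then 0 else ((B : ℝ) ^ (M j))⁻¹)) ≤ 1 := by
    have step1 : ∀ j, (if y j = 0 then (0:ℝ) else ((B : ℝ) ^ (M j))⁻¹)
        ≤ (B:ℝ)⁻¹ * ∑ i ∈ T, (if x i j = 0 then 0 else ((B : ℝ) ^ (mm i j))⁻¹) := by
      intro j
      by_cases hyj0 : y j = 0
      · rw [if_pos hyj0]
        apply mul_nonneg (by positivity)
        apply Finset.sum_nonneg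
        intro i _
        split
        · exact le_rfl
        · positivity
      · rw [if_neg hyj0]
        have hne : (S j).Nonempty := (hSy j).1 hyj0
        obtain ⟨i0, hi0, hinf⟩ := Finset.exists_mem_eq_inf' hne (fun i => mm i j)
        have hMj : M j = 1 + mm i0 j := by rw [hM]; simp only [dif_pos hne]; rw [hinf]
        have hi0' : t i0 ≠ 0 ∧ x i0 j ≠ 0 := by
          simpa [hS, Finset.mem_filter] using hi0
        have e : ((B : ℝ) ^ (M j))⁻¹ = (B:ℝ)⁻¹ * ((B : ℝ) ^ (mm i0 j))⁻¹ := by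
          rw [hMj, pow_add, pow_one, mul_inv]
        rw [e]
        apply mul_le_mul_of_nonneg_left _ (by positivity)
        have hi0T : i0 ∈ T := by
          simp only [hT, Finset.mem_filter, Finset.mem_univ, true_and]; exact hi0'.1
        have hnn' : ∀ i ∈ T, (0:ℝ) ≤ (if x i j = 0 then (0:ℝ) else ((B : ℝ) ^ (mm i j))⁻¹) := by
          intro i _
          split
          exacts [le_rfl, by positivity]
        have := Finset.single_le_sum hnn' hi0T
        rwa [if_neg hi0'.2] at this
    calc (∑ j, (if y j = 0 then (0:ℝ) else ((B : ℝ) ^ (M j))⁻¹))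
        ≤ ∑ j, (B:ℝ)⁻¹ * ∑ i ∈ T, (if x i j = 0 then 0 else ((B : ℝ) ^ (mm i j))⁻¹) :=
          Finset.sum_le_sum fun j _ => step1 j
      _ = (B:ℝ)⁻¹ * ∑ i ∈ T, ∑ j, (if x i j = 0 then 0 else ((B : ℝ) ^ (mm i j))⁻¹) := by
          rw [← Finset.mul_sum, Finset.sum_comm]
      _ ≤ (B:ℝ)⁻¹ * ∑ i ∈ T, 1 := by
          apply mul_le_mul_of_nonneg_left _ (by positivity)
          exact Finset.sum_le_sum fun i _ => hkraft i
      _ = (B:ℝ)⁻¹ * (T.card : ℝ) := by rw [Finset.sum_const]; simp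
      _ ≤ (B:ℝ)⁻¹ * (B : ℝ) := by
          apply mul_le_mul_of_nonneg_left _ (by positivity)
          have : T.card ≤ B := by
            calc T.card ≤ (univ : Finset (Fin B)).card := Finset.card_filter_le _ _
              _ = B := by simp
          exact_mod_cast this
      _ = 1 := inv_mul_cancel₀ hB0.ne'
  -- value bound
  have hvaly : ∑ j, (M j : ℝ) * y j ≤ 1 + ∑ i, t i * ∑ j, (mm i j : ℝ) * x i j := by
    have step2 : ∀ j, (M j : ℝ) * y j ≤ y j + ∑ i, t i * x i j * (mm i j : ℝ) := by
      intro j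
      by_cases hyj0 : y j = 0
      · rw [hyj0, mul_zero]
        have : (0:ℝ) ≤ ∑ i, t i * x i j * (mm i j : ℝ) :=
          Finset.sum_nonneg fun i _ =>
            mul_nonneg (mul_nonneg (ht i) (hxnn i j)) (by positivity)
        linarith
      · have hne : (S j).Nonempty := (hSy j).1 hyj0
        have hMj : M j = 1 + (S j).inf' hne (fun i => mm i j) := by
          rw [hM]; simp only [dif_pos hne]
        rw [hMj]
        push_cast
        rw [add_mul, one_mul, add_le_add_iff_left, hyj, Finset.mul_sum]
        apply Finset.sum_le_sum
        intro i _
        by_cases hti : t i * x i j = 0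
        · rw [show t i * x i j = 0 from hti]; simp
        · have hiS : i ∈ S j := by
            simp only [hS, Finset.mem_filter, Finset.mem_univ, true_and]
            constructor
            · intro h; exact hti (by rw [h, zero_mul])
            · intro h; exact hti (by rw [h, mul_zero])
          have hle : ((S j).inf' hne (fun i => mm i j) : ℝ) ≤ (mm i j : ℝ) := by
            exact_mod_cast Finset.inf'_le (fun i => mm i j) hiS
          have hnn : 0 ≤ t i * x i j := mul_nonneg (ht i) (hxnn i j)
          calc ((S j).inf' hne (fun i => mm i j) : ℝ) * (t i * x i j)
              ≤ (mm i j : ℝ) * (t i * x i j) := mul_le_mul_of_nonneg_right hle hnn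
            _ = t i * x i j * (mm i j : ℝ) := by ring
    calc ∑ j, (M j : ℝ) * y j
        ≤ ∑ j, (y j + ∑ i, t i * x i j * (mm i j : ℝ)) :=
          Finset.sum_le_sum fun j _ => step2 j
      _ = (∑ j, y j) + ∑ j, ∑ i, t i * x i j * (mm i j : ℝ) := Finset.sum_add_distrib
      _ = 1 + ∑ i, ∑ j, t i * x i j * (mm i j : ℝ) := by rw [hysum, Finset.sum_comm]
      _ = 1 + ∑ i, t i * ∑ j, (mm i j : ℝ) * x i j := by
          congr 1
          refine Finset.sum_congr rfl fun i _ => ?_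
          rw [Finset.mul_sum]
          exact Finset.sum_congr rfl fun j _ => by ring
  have hmem : (∑ j, (M j : ℝ) * y j) ∈ Eset n B y := ⟨M, hkrafty, rfl⟩
  have h1 : Efun n B y ≤ ∑ j, (M j : ℝ) * y j := Efun_le n B y hynn hmem
  have h2 : ∑ i, t i * ∑ j, (mm i j : ℝ) * x i j
      ≤ ∑ i, t i * (Efun n B (x i) + ε) :=
    Finset.sum_le_sum fun i _ => mul_le_mul_of_nonneg_left (hval i).le (ht i)
  have h3 : ∑ i, t i * (Efun n B (x i) + ε) = (∑ i, t i * Efun n B (x i)) + ε := by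
    have e : ∑ i, t i * (Efun n B (x i) + ε)
        = (∑ i, t i * Efun n B (x i)) + (∑ i, t i) * ε := by
      rw [Finset.sum_mul, ← Finset.sum_add_distrib]
      exact Finset.sum_congr rfl fun i _ => by ring
    rw [e, hts, one_mul]
  calc Efun n B y ≤ ∑ j, (M j : ℝ) * y j := h1
    _ ≤ 1 + ∑ i, t i * ∑ j, (mm i j : ℝ) * x i j := hvaly
    _ ≤ 1 + ((∑ i, t i * Efun n B (x i)) + ε) := by rw [← h3]; linarith
    _ = (∑ i, t i * Efun n B (x i)) + 1 + ε := by ring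

theorem stmt16 (n B : ℕ) (hn : 1 ≤ n) (hB : 2 ≤ B) :
    ∃ f : (Fin (n + 1) → ℝ) → ℝ,
      ApproxConvexWrt B (stdSimplex ℝ (Fin (n + 1))) f 1 ∧
      ∀ g : (Fin (n + 1) → ℝ) → ℝ,
        ConvexOn ℝ (stdSimplex ℝ (Fin (n + 1))) g →
        (∀ x ∈ stdSimplex ℝ (Fin (n + 1)), g x ≤ f x) →
        ∀ c : ℝ, (∀ x ∈ stdSimplex ℝ (Fin (n + 1)), f x - g x ≤ c) →
          kappa n B ≤ c := by
  have hB1R : (1:ℝ) < (B:ℝ) := by exact_mod_cast (by omega : 1 < B)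
  have hn1R : (1:ℝ) ≤ (n:ℝ) := by exact_mod_cast hn
  have hL0 : 0 ≤ ⌊Real.logb B n⌋ :=
    Int.floor_nonneg.2 (Real.logb_nonneg hB1R hn1R)
  set L : ℤ := ⌊Real.logb B n⌋ with hLdef
  set ℓ : ℕ := L.toNat with hldef
  have hLℓ : L = (ℓ : ℤ) := (Int.toNat_of_nonneg hL0).symm
  have hnp : (0:ℝ) < (n:ℝ) + 1 := by positivity
  refine ⟨Efun n B, Efun_approx n B hB, ?_⟩
  intro g hg hgle c hc
  set v : Fin (n+1) → Fin (n+1) → ℝ := fun j => Pi.single j 1 with hv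
  have hvapp : ∀ j k, v j k = if k = j then 1 else 0 := by
    intro j k; rw [hv]; simp [Pi.single_apply]
  have hvmem : ∀ j, v j ∈ stdSimplex ℝ (Fin (n+1)) := by
    intro j
    constructor
    · intro k; rw [hvapp]; split <;> norm_num
    · simp [hvapp]
  set b : Fin (n+1) → ℝ := fun _ => ((n:ℝ)+1)⁻¹ with hb
  have hbpos : ∀ k, (0:ℝ) < b k := fun k => by rw [hb]; positivity
  have hbmem : b ∈ stdSimplex ℝ (Fin (n+1)) := by
    constructor
    · intro k; exact (hbpos k).le
    · rw [hb]; rw [Finset.sum_const, Finset.card_univ, Fintype.card_fin]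
      simp only [nsmul_eq_mul]
      push_cast
      field_simp
  -- Jensen at the barycenter
  have hbsum : b = ∑ j, ((n:ℝ)+1)⁻¹ • v j := by
    funext k
    rw [Finset.sum_apply]
    simp only [Pi.smul_apply, smul_eq_mul, hvapp]
    rw [Finset.sum_congr rfl (fun j _ => by rw [mul_ite, mul_one, mul_zero])]
    rw [Finset.sum_ite_eq univ k (fun _ => ((n:ℝ)+1)⁻¹)]
    simp [hb]
  have hwsum : ∑ _j : Fin (n+1), ((n:ℝ)+1)⁻¹ = 1 := by
    rw [Finset.sum_const, Finset.card_univ, Fintype.card_fin]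
    simp only [nsmul_eq_mul]
    push_cast
    field_simp
  have hJ : g b ≤ ∑ j, ((n:ℝ)+1)⁻¹ * g (v j) := by
    have := hg.map_sum_le (t := univ) (w := fun _ => ((n:ℝ)+1)⁻¹) (p := v)
      (fun i _ => by positivity) hwsum (fun i _ => hvmem i)
    simpa [← hbsum, smul_eq_mul] using this
  -- Efun at vertices is ≤ 0
  have hEv : ∀ j, Efun n B (v j) ≤ 0 := by
    intro j
    apply Efun_le n B (v j) (fun k => (hvmem j).1 k)
    refine ⟨fun _ => 0, ?_, by simp⟩
    have : ∀ k : Fin (n+1), (if v j k = 0 then (0:ℝ) else (((B:ℝ)) ^ (0:ℕ))⁻¹)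
        = if k = j then 1 else 0 := by
      intro k
      rw [hvapp]
      by_cases h : k = j <;> simp [h]
    rw [Finset.sum_congr rfl fun k _ => this k]
    simp
  have hgb : g b ≤ 0 := by
    have h1 : ∑ j, ((n:ℝ)+1)⁻¹ * g (v j) ≤ ∑ j, ((n:ℝ)+1)⁻¹ * (0:ℝ) :=
      Finset.sum_le_sum fun j _ => mul_le_mul_of_nonneg_left
        ((hgle (v j) (hvmem j)).trans (hEv j)) (by positivity)
    simpa using hJ.trans h1
  -- kappa ≤ Efun at barycenter
  have hkb : kappa n B ≤ Efun n B b := by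
    apply le_csInf (Eset_nonempty n B hB b)
    rintro r ⟨m, hm1, rfl⟩
    have hm1' : ∑ j, ((B:ℝ) ^ (m j))⁻¹ ≤ 1 := by
      rw [← Finset.sum_congr rfl fun j (_ : j ∈ univ) => if_neg (hbpos j).ne']
      exact hm1
    have hK := kraftLB n B hB ℓ m hm1'
    set R : ℝ := (B : ℝ) * ((n : ℝ) + 1 - (B : ℝ) ^ ℓ) / ((B : ℝ) - 1) with hR
    have hkap : kappa n B = (ℓ:ℝ) + (⌈R⌉ : ℝ) / ((n:ℝ)+1) := by
      rw [kappa, ← hLdef, hLℓ, hR, zpow_natCast]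
      push_cast
      ring_nf
    have hz : (⌈R⌉ : ℝ) ≤ (∑ j, (m j : ℝ)) - ((n:ℝ)+1) * ℓ := by
      have hzz : ⌈R⌉ ≤ (∑ j, (m j : ℤ)) - ((n:ℤ)+1) * ℓ := by
        apply Int.ceil_le.2
        push_cast
        linarith [hK]
      calc (⌈R⌉ : ℝ) ≤ ((∑ j, (m j : ℤ)) - ((n:ℤ)+1) * (ℓ:ℤ) : ℤ) := by exact_mod_cast hzz
        _ = (∑ j, (m j : ℝ)) - ((n:ℝ)+1) * ℓ := by push_cast; ring
    have hrb : ∑ j, (m j : ℝ) * b j = (∑ j, (m j : ℝ)) * ((n:ℝ)+1)⁻¹ := by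
      rw [Finset.sum_mul]
    rw [hkap, hrb]
    have hkey : ((ℓ:ℝ) + (⌈R⌉ : ℝ) / ((n:ℝ)+1)) * ((n:ℝ)+1)
        ≤ ((∑ j, (m j : ℝ)) * ((n:ℝ)+1)⁻¹) * ((n:ℝ)+1) := by
      have e1 : ((ℓ:ℝ) + (⌈R⌉ : ℝ) / ((n:ℝ)+1)) * ((n:ℝ)+1)
          = (ℓ:ℝ) * ((n:ℝ)+1) + (⌈R⌉ : ℝ) := by field_simp
      have e2 : ((∑ j, (m j : ℝ)) * ((n:ℝ)+1)⁻¹) * ((n:ℝ)+1) = ∑ j, (m j : ℝ) := by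
        field_simp
      rw [e1, e2]
      linarith [hz]
    exact le_of_mul_le_mul_right hkey hnp
  have hfinal := hc b hbmem
  linarith [hkb, hgb, hfinal]
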